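/- Suppose ℓ > 0 and d > arsinh(1) satisfy sinh(ℓ/2) sinh(d) ≤ 1, and i ≥ 0 satisfies sinh(i) = cosh(ℓ/2) cosh(d) - sinh(d). Then sinh(i) ≤ (1 + √2) e^(-d). -/

import Mathlib

open Real

/-- Case 2 of the upper injectivity radius bound in a collar: if d > arsinh 1
and sinh(ℓ/2) sinh(d) ≤ 1. -/
theorem stmt_5 (ℓ d i : ℝ) (hℓ0 : 0 < ℓ) (hd : arsinh 1 < d)
    (hcollar : sinh (ℓ / 2) * sinh d ≤ 1) (hi : 0 ≤ i)
    (heq : sinh i = cosh (ℓ / 2) * cosh d - sinh d) :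
    sinh i ≤ (1 + Real.sqrt 2) * Real.exp (-d) := by
  have hs : 1 < sinh d := by
    calc 1 = sinh (arsinh 1) := (Real.sinh_arsinh 1).symm
    _ < sinh d := Real.sinh_lt_sinh.mpr hd
  have hs0 : 0 < sinh d := by linarith
  have hc0 : 0 < cosh d := Real.cosh_pos d
  have hcs : cosh d ^ 2 = 1 + sinh d ^ 2 := by
    have := Real.cosh_sq d; linarith
  have hshp : 0 ≤ sinh (ℓ / 2) := by
    rw [← Real.sinh_zero]
    exact Real.sinh_le_sinh.mpr (by linarith)
  have hch2 : cosh (ℓ / 2) ^ 2 ≤ (cosh d / sinh d) ^ 2 := by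
    rw [Real.cosh_sq, div_pow, le_div_iff₀ (show (0:ℝ) < sinh d ^ 2 by positivity)]
    nlinarith [hcollar, mul_nonneg hshp hs0.le, hcs]
  have hch : cosh (ℓ / 2) ≤ cosh d / sinh d := by
    have h1 : 0 < cosh d / sinh d := by positivity
    nlinarith [Real.cosh_pos (ℓ / 2)]
  have hexp : Real.exp (-d) = cosh d - sinh d := (Real.cosh_sub_sinh d).symm
  have hbound : sinh i ≤ cosh d ^ 2 / sinh d - sinh d := by
    rw [heq]
    have h2 : cosh (ℓ / 2) * cosh d ≤ cosh d / sinh d * cosh d :=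
      mul_le_mul_of_nonneg_right hch hc0.le
    have h3 : cosh d / sinh d * cosh d = cosh d ^ 2 / sinh d := by ring
    linarith [h3 ▸ h2]
  rw [hexp]
  have hsq2 : Real.sqrt 2 ^ 2 = 2 := Real.sq_sqrt (by norm_num)
  have hsq2pos : 0 < Real.sqrt 2 := Real.sqrt_pos.mpr (by norm_num)
  have hkey : cosh d ≤ Real.sqrt 2 * sinh d := by
    have h2 : cosh d ^ 2 ≤ (Real.sqrt 2 * sinh d) ^ 2 := by
      rw [mul_pow, hsq2]; nlinarith
    have h3 := Real.sqrt_le_sqrt h2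
    rwa [Real.sqrt_sq hc0.le, Real.sqrt_sq (by positivity)] at h3
  have hcms : 0 < cosh d - sinh d := by
    rw [← hexp]; exact Real.exp_pos _
  have hfin : cosh d ^ 2 / sinh d - sinh d ≤ (1 + Real.sqrt 2) * (cosh d - sinh d) := by
    rw [div_sub' hs0.ne', div_le_iff₀ hs0]
    nlinarith [mul_nonneg hcms.le (sub_nonneg.mpr hkey)]
  linarith
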